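/- arXiv:2206.11099 — 5 statements merged into one kernel-verified Lean document; each statement's English description precedes it below -/
import Mathlib

section
/- Let k be a totally ordered division ring, let I ⊆ J be sets, and let D be a finite subset of k^(J). Then Bool(k^(I) ∪ D, k^(J)) is relatively complete in Bool(k^(J), k^(J)). -/
/-- The linear functional `x ↦ Σ_i a_i * x_i` on `k^(ι)` associated with `a ∈ k^(ι)`. -/
def pairing {k ι : Type*} [DivisionRing k] (a x : ι →₀ k) : k :=
  a.sum fun i c => c * x i

/-- The vectors of `k^(ι)` supported on a subset `I ⊆ ι` (the copy of `k^(I)`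
inside `k^(ι)`). -/
def suppIn {k ι : Type*} [Zero k] (I : Set ι) : Set (ι →₀ k) :=
  {y : ι →₀ k | ∀ i, i ∉ I → y i = 0}

/-- Membership in `Bool(A, Ω)`: the Boolean subalgebra of the powerset of `Ω` generated
by the sets `⟦a > 0⟧` and `⟦a < 0⟧` for `a ∈ A` (identifying `a` with its linear
functional). -/
inductive MemBool {k ι : Type*} [DivisionRing k] [LinearOrder k]
    (A Ω : Set (ι →₀ k)) : Set (ι →₀ k) → Prop
  | pos (a : ι →₀ k) (ha : a ∈ A) : MemBool A Ω {x ∈ Ω | 0 < pairing a x}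
  | neg (a : ι →₀ k) (ha : a ∈ A) : MemBool A Ω {x ∈ Ω | pairing a x < 0}
  | empty : MemBool A Ω ∅
  | full : MemBool A Ω Ω
  | union {U V : Set (ι →₀ k)} : MemBool A Ω U → MemBool A Ω V → MemBool A Ω (U ∪ V)
  | inter {U V : Set (ι →₀ k)} : MemBool A Ω U → MemBool A Ω V → MemBool A Ω (U ∩ V)
  | sdiff {U V : Set (ι →₀ k)} : MemBool A Ω U → MemBool A Ω V → MemBool A Ω (U \ V)

/- ===================  Auxiliary development  =================== -/

open scoped Classical
set_option linter.unusedSectionVars false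

instance : Fintype Ordering :=
  ⟨{Ordering.lt, Ordering.eq, Ordering.gt}, fun x => by cases x <;> simp⟩

section Aux

variable {k ι : Type*} [DivisionRing k] [LinearOrder k]
  [CovariantClass k k (· + ·) (· < ·)] [PosMulStrictMono k] [MulPosStrictMono k]

/- ----------------- order arithmetic ----------------- -/

lemma SL.zero_lt_one : (0 : k) < 1 := by
  rcases lt_trichotomy (0 : k) 1 with h | h | h
  · exact h
  · exact absurd h.symm one_ne_zero
  · have h1 : (0 : k) < -1 := neg_pos.2 h
    have := mul_pos h1 h1
    rw [neg_mul_neg, one_mul] at this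
    exact absurd this (asymm h)

lemma SL.two_pos : (0 : k) < 2 := by
  have h1 := SL.zero_lt_one (k := k)
  calc (0:k) < 1 := h1
    _ < 1 + 1 := lt_add_of_pos_right 1 h1
    _ = 2 := (one_add_one_eq_two)

lemma SL.inv_pos_of_pos {c : k} (hc : 0 < c) : 0 < c⁻¹ := by
  rcases lt_trichotomy (0 : k) c⁻¹ with h | h | h
  · exact h
  · exfalso
    have : c ≠ 0 := ne_of_gt hc
    have := mul_inv_cancel₀ this
    rw [← h, mul_zero] at this
    exact one_ne_zero this.symm
  · exfalso
    have h2 : c * c⁻¹ < 0 := mul_neg_of_pos_of_neg hc h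
    rw [mul_inv_cancel₀ (ne_of_gt hc)] at h2
    exact asymm h2 SL.zero_lt_one

lemma SL.midpoint {a b : k} (h : a < b) : a < (a + b) / 2 ∧ (a + b) / 2 < b := by
  haveI : NeZero (2:k) := ⟨ne_of_gt SL.two_pos⟩
  have hq : (0:k) < (b - a) / 2 := by
    rw [div_eq_mul_inv]
    exact mul_pos (sub_pos.2 h) (SL.inv_pos_of_pos SL.two_pos)
  constructor
  · have e : (a + b) / 2 - a = (b - a) / 2 := by
      rw [add_div, sub_div]
      nth_rewrite 2 [← add_halves a]
      abel
    exact sub_pos.1 (by rw [e]; exact hq)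
  · have e : b - (a + b) / 2 = (b - a) / 2 := by
      rw [add_div, sub_div]
      nth_rewrite 1 [← add_halves b]
      abel
    exact sub_pos.1 (by rw [e]; exact hq)

/- ----------------- sign equivalence ----------------- -/

/-- Two scalars have the same sign. -/
def SgnEq (a b : k) : Prop := (0 < a ↔ 0 < b) ∧ (a < 0 ↔ b < 0)

lemma SgnEq.symm {a b : k} (h : SgnEq a b) : SgnEq b a := ⟨h.1.symm, h.2.symm⟩

lemma SgnEq.of_pos_pos {a b : k} (ha : 0 < a) (hb : 0 < b) : SgnEq a b :=
  ⟨iff_of_true ha hb, iff_of_false (asymm ha) (asymm hb)⟩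

lemma SgnEq.of_neg_neg {a b : k} (ha : a < 0) (hb : b < 0) : SgnEq a b :=
  ⟨iff_of_false (asymm ha) (asymm hb), iff_of_true ha hb⟩

lemma SgnEq.of_eq_eq {a b : k} (ha : a = 0) (hb : b = 0) : SgnEq a b := by
  subst ha; subst hb; exact ⟨Iff.rfl, Iff.rfl⟩

lemma SL.mul_pos_iff_of_pos {c a : k} (hc : 0 < c) : 0 < c * a ↔ 0 < a := by
  constructor
  · intro h
    rcases lt_trichotomy (0 : k) a with h' | h' | h'
    · exact h'
    · rw [← h', mul_zero] at h; exact absurd h (lt_irrefl 0)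
    · exact absurd h (asymm (mul_neg_of_pos_of_neg hc h'))
  · exact fun h => mul_pos hc h

lemma SL.mul_neg_iff_of_pos {c a : k} (hc : 0 < c) : c * a < 0 ↔ a < 0 := by
  constructor
  · intro h
    rcases lt_trichotomy (0 : k) a with h' | h' | h'
    · exact absurd h (asymm (mul_pos hc h'))
    · rw [← h', mul_zero] at h; exact absurd h (lt_irrefl 0)
    · exact h'
  · exact fun h => mul_neg_of_pos_of_neg hc h

lemma SL.mul_pos_iff_of_neg {c a : k} (hc : c < 0) : 0 < c * a ↔ a < 0 := by
  constructor
  · intro h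
    rcases lt_trichotomy (0 : k) a with h' | h' | h'
    · exact absurd h (asymm (mul_neg_of_neg_of_pos hc h'))
    · rw [← h', mul_zero] at h; exact absurd h (lt_irrefl 0)
    · exact h'
  · exact fun h => mul_pos_of_neg_of_neg hc h

lemma SL.mul_neg_iff_of_neg {c a : k} (hc : c < 0) : c * a < 0 ↔ 0 < a := by
  constructor
  · intro h
    rcases lt_trichotomy (0 : k) a with h' | h' | h'
    · exact h'
    · rw [← h', mul_zero] at h; exact absurd h (lt_irrefl 0)
    · exact absurd h (asymm (mul_pos_of_neg_of_neg hc h'))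
  · exact fun h => mul_neg_of_neg_of_pos hc h

lemma SgnEq.mul_left {c a b : k} (hc : c ≠ 0) (h : SgnEq a b) : SgnEq (c * a) (c * b) := by
  rcases hc.lt_or_gt with h' | h'
  · exact ⟨(SL.mul_pos_iff_of_neg h').trans (h.2.trans (SL.mul_pos_iff_of_neg h').symm),
      (SL.mul_neg_iff_of_neg h').trans (h.1.trans (SL.mul_neg_iff_of_neg h').symm)⟩
  · exact ⟨(SL.mul_pos_iff_of_pos h').trans (h.1.trans (SL.mul_pos_iff_of_pos h').symm),
      (SL.mul_neg_iff_of_pos h').trans (h.2.trans (SL.mul_neg_iff_of_pos h').symm)⟩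

/-- sign as an `Ordering` (`gt` means positive). -/
def osgn (a : k) : Ordering := if 0 < a then .gt else if a < 0 then .lt else .eq

lemma osgn_gt {a : k} : osgn a = .gt ↔ 0 < a := by
  unfold osgn; split_ifs with h1 h2 <;> simp_all

lemma osgn_lt {a : k} : osgn a = .lt ↔ a < 0 := by
  unfold osgn; split_ifs with h1 h2 <;> simp_all
  exact h1.le

lemma sgnEq_iff_osgn {a b : k} : SgnEq a b ↔ osgn a = osgn b := by
  constructor
  · rintro ⟨h1, h2⟩
    unfold osgn
    split_ifs with g1 g2 g3 g4 <;> simp_all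
  · intro h
    refine ⟨?_, ?_⟩
    · rw [← osgn_gt, ← osgn_gt, h]
    · rw [← osgn_lt, ← osgn_lt, h]

end Aux

section Aux2

variable {k ι : Type*} [DivisionRing k] [LinearOrder k]
  [CovariantClass k k (· + ·) (· < ·)] [PosMulStrictMono k] [MulPosStrictMono k]

/- ----------------- pairing lemmas ----------------- -/

lemma pairing_add (f g x : ι →₀ k) : pairing (f + g) x = pairing f x + pairing g x :=
  Finsupp.sum_add_index' (fun _ => zero_mul _) (fun _ b c => add_mul b c _)

lemma pairing_single (j : ι) (c : k) (x : ι →₀ k) : pairing (Finsupp.single j c) x = c * x j :=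
  Finsupp.sum_single_index (zero_mul _)

lemma pairing_smul (c : k) (f x : ι →₀ k) : pairing (c • f) x = c * pairing f x := by
  rw [pairing, Finsupp.sum_smul_index' (h := fun i a => a * x i) (fun _ => zero_mul _),
    pairing, Finsupp.mul_sum]
  exact Finsupp.sum_congr fun i _ => by rw [smul_eq_mul, mul_assoc]

lemma pairing_sub (f g x : ι →₀ k) : pairing (f - g) x = pairing f x - pairing g x :=
  Finsupp.sum_sub_index (fun _ b c => sub_mul b c _)

lemma pairing_congr {f x y : ι →₀ k} (h : ∀ i, f i ≠ 0 → x i = y i) :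
    pairing f x = pairing f y :=
  Finsupp.sum_congr fun i hi => by rw [h i (Finsupp.mem_support_iff.1 hi)]

lemma pairing_update (f x : ι →₀ k) (j : ι) (t : k) :
    pairing f (x.update j t) = pairing (f.erase j) x + f j * t := by
  conv_lhs => rw [← Finsupp.erase_add_single j f]
  rw [pairing_add, pairing_single]
  congr 1
  · exact pairing_congr fun i hi => by
      rw [Finsupp.coe_update, Function.update_of_ne (fun h => by subst h; simp at hi)]
  · rw [Finsupp.coe_update, Function.update_self]

/- ----------------- invariance ----------------- -/

/-- `Y` only depends on the signs of the functionals in `F`. -/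
def SgnInv (F : Finset (ι →₀ k)) (Y : Set (ι →₀ k)) : Prop :=
  ∀ x y, (∀ f ∈ F, SgnEq (pairing f x) (pairing f y)) → (x ∈ Y ↔ y ∈ Y)

lemma SgnInv.mono {F F' : Finset (ι →₀ k)} {Y : Set (ι →₀ k)} (h : SgnInv F Y) (hFF' : F ⊆ F') :
    SgnInv F' Y := fun x y hs => h x y fun f hf => hs f (hFF' hf)

lemma SgnInv.inter {F : Finset (ι →₀ k)} {Y Y' : Set (ι →₀ k)} (h : SgnInv F Y) (h' : SgnInv F Y') :
    SgnInv F (Y ∩ Y') := fun x y hs => by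
  simp only [Set.mem_inter_iff]
  exact and_congr (h x y hs) (h' x y hs)

/-- Every set in the full Boolean algebra is invariant for some finite set of functionals. -/
lemma exists_inv_of_memBool {Y : Set (ι →₀ k)}
    (hY : MemBool (Set.univ : Set (ι →₀ k)) Set.univ Y) : ∃ F : Finset (ι →₀ k), SgnInv F Y := by
  induction hY with
  | pos a ha =>
      exact ⟨{a}, fun x y hs => by
        simp only [Set.mem_setOf_eq, Set.mem_univ, true_and]
        exact (hs a (Finset.mem_singleton_self a)).1⟩
  | neg a ha =>
      exact ⟨{a}, fun x y hs => by
        simp only [Set.mem_setOf_eq, Set.mem_univ, true_and]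
        exact (hs a (Finset.mem_singleton_self a)).2⟩
  | empty => exact ⟨∅, fun x y _ => Iff.rfl⟩
  | full => exact ⟨∅, fun x y _ => by simp⟩
  | union h1 h2 ih1 ih2 =>
      obtain ⟨F1, hF1⟩ := ih1; obtain ⟨F2, hF2⟩ := ih2
      exact ⟨F1 ∪ F2, fun x y hs => by
        simp only [Set.mem_union]
        exact or_congr (hF1.mono Finset.subset_union_left x y hs)
          (hF2.mono Finset.subset_union_right x y hs)⟩
  | inter h1 h2 ih1 ih2 =>
      obtain ⟨F1, hF1⟩ := ih1; obtain ⟨F2, hF2⟩ := ih2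
      exact ⟨F1 ∪ F2, fun x y hs => by
        simp only [Set.mem_inter_iff]
        exact and_congr (hF1.mono Finset.subset_union_left x y hs)
          (hF2.mono Finset.subset_union_right x y hs)⟩
  | sdiff h1 h2 ih1 ih2 =>
      obtain ⟨F1, hF1⟩ := ih1; obtain ⟨F2, hF2⟩ := ih2
      exact ⟨F1 ∪ F2, fun x y hs => by
        simp only [Set.mem_diff]
        exact and_congr (hF1.mono Finset.subset_union_left x y hs)
          (not_congr (hF2.mono Finset.subset_union_right x y hs))⟩

/- ----------------- MemBool closure lemmas ----------------- -/

lemma MemBool.mono {A B Ω : Set (ι →₀ k)} {U : Set (ι →₀ k)} (h : MemBool A Ω U) (hAB : A ⊆ B) :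
    MemBool B Ω U := by
  induction h with
  | pos a ha => exact .pos a (hAB ha)
  | neg a ha => exact .neg a (hAB ha)
  | empty => exact .empty
  | full => exact .full
  | union _ _ ih1 ih2 => exact .union ih1 ih2
  | inter _ _ ih1 ih2 => exact .inter ih1 ih2
  | sdiff _ _ ih1 ih2 => exact .sdiff ih1 ih2

lemma memBool_setOf_pos {A : Set (ι →₀ k)} {a : ι →₀ k} (ha : a ∈ A) :
    MemBool A Set.univ {x | 0 < pairing a x} := by
  have := MemBool.pos (A := A) (Ω := Set.univ) a ha
  simpa [Set.sep_univ] using this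

lemma memBool_setOf_neg {A : Set (ι →₀ k)} {a : ι →₀ k} (ha : a ∈ A) :
    MemBool A Set.univ {x | pairing a x < 0} := by
  have := MemBool.neg (A := A) (Ω := Set.univ) a ha
  simpa [Set.sep_univ] using this

lemma memBool_osgnSet {A : Set (ι →₀ k)} {a : ι →₀ k} (ha : a ∈ A) (o : Ordering) :
    MemBool A Set.univ {x | osgn (pairing a x) = o} := by
  cases o with
  | lt =>
      have e : {x : ι →₀ k | osgn (pairing a x) = .lt} = {x | pairing a x < 0} := by
        ext x; simp [osgn_lt]
      rw [e]; exact memBool_setOf_neg ha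
  | gt =>
      have e : {x : ι →₀ k | osgn (pairing a x) = .gt} = {x | 0 < pairing a x} := by
        ext x; simp [osgn_gt]
      rw [e]; exact memBool_setOf_pos ha
  | eq =>
      have e : {x : ι →₀ k | osgn (pairing a x) = .eq} =
          Set.univ \ ({x | 0 < pairing a x} ∪ {x | pairing a x < 0}) := by
        ext x
        simp only [Set.mem_setOf_eq, Set.mem_diff, Set.mem_univ, Set.mem_union, true_and, not_or]
        unfold osgn
        split_ifs with h1 h2 <;> simp_all
      rw [e]
      exact .sdiff .full (.union (memBool_setOf_pos ha) (memBool_setOf_neg ha))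

lemma memBool_biInter {A : Set (ι →₀ k)} {β : Type*} (s : Finset β) (g : β → Set (ι →₀ k))
    (h : ∀ b ∈ s, MemBool A Set.univ (g b)) : MemBool A Set.univ (⋂ b ∈ s, g b) := by
  induction s using Finset.induction_on with
  | empty => simpa using (MemBool.full (A := A) (Ω := (Set.univ : Set (ι →₀ k))))
  | insert _ _ hb ih =>
      rw [Finset.set_biInter_insert]
      exact .inter (h _ (Finset.mem_insert_self _ _))
        (ih fun b hb' => h b (Finset.mem_insert_of_mem hb'))

lemma memBool_biUnion {A : Set (ι →₀ k)} {β : Type*} (s : Finset β) (g : β → Set (ι →₀ k))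
    (h : ∀ b ∈ s, MemBool A Set.univ (g b)) : MemBool A Set.univ (⋃ b ∈ s, g b) := by
  induction s using Finset.induction_on with
  | empty => simpa using (MemBool.empty (A := A) (Ω := (Set.univ : Set (ι →₀ k))))
  | insert _ _ hb ih =>
      rw [Finset.set_biUnion_insert]
      exact .union (h _ (Finset.mem_insert_self _ _))
        (ih fun b hb' => h b (Finset.mem_insert_of_mem hb'))

/- ----------------- cells ----------------- -/

/-- The cell of the arrangement of `F` given by the sign pattern `σ`. -/
def cell (F : Finset (ι →₀ k)) (σ : F → Ordering) : Set (ι →₀ k) :=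
  {x | ∀ f : F, osgn (pairing f.1 x) = σ f}

lemma memBool_cell {A : Set (ι →₀ k)} {F : Finset (ι →₀ k)} (hF : ↑F ⊆ A) (σ : F → Ordering) :
    MemBool A Set.univ (cell F σ) := by
  have e : cell F σ = ⋂ f ∈ F.attach, {x | osgn (pairing f.1 x) = σ f} := by
    ext x; simp [cell, Set.mem_iInter]
  rw [e]
  exact memBool_biInter _ _ fun f _ => memBool_osgnSet (hF f.2) (σ f)

lemma inv_cell (F : Finset (ι →₀ k)) (σ : F → Ordering) : SgnInv F (cell F σ) := by
  intro x y hs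
  simp only [cell, Set.mem_setOf_eq]
  exact forall_congr' fun f => by rw [sgnEq_iff_osgn.1 (hs f.1 f.2)]

lemma inv_memBool {A : Set (ι →₀ k)} {F : Finset (ι →₀ k)} {Y : Set (ι →₀ k)}
    (hF : ↑F ⊆ A) (hY : SgnInv F Y) : MemBool A Set.univ Y := by
  classical
  have e : Y = ⋃ σ ∈ Finset.univ.filter
      (fun σ : F → Ordering => ∃ y ∈ Y, (fun f : F => osgn (pairing f.1 y)) = σ), cell F σ := by
    ext x
    simp only [Set.mem_iUnion, Finset.mem_filter, Finset.mem_univ, true_and, exists_prop]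
    constructor
    · intro hx
      exact ⟨fun f : F => osgn (pairing f.1 x), ⟨x, hx, rfl⟩, fun f => rfl⟩
    · rintro ⟨σ, ⟨y, hy, rfl⟩, hx⟩
      refine (hY x y fun f hf => sgnEq_iff_osgn.2 ?_).2 hy
      exact hx ⟨f, hf⟩
  rw [e]
  exact memBool_biUnion _ _ fun σ _ => memBool_cell hF σ

end Aux2

section Aux3

variable {k ι : Type*} [DivisionRing k] [LinearOrder k]
  [CovariantClass k k (· + ·) (· < ·)] [PosMulStrictMono k] [MulPosStrictMono k]

/-- The key scalar lemma: realizability of sign patterns of one-variable affine families is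
determined by the signs of the coefficients at `c f = 0` and by the relative order of roots. -/
lemma exists_matching_param {α : Type*} (S : Finset α) (A A' c : α → k)
    (h0 : ∀ f ∈ S, c f = 0 → SgnEq (A f) (A' f))
    (hp : ∀ f ∈ S, ∀ g ∈ S, c f ≠ 0 → c g ≠ 0 →
      SgnEq ((c f)⁻¹ * A f - (c g)⁻¹ * A g) ((c f)⁻¹ * A' f - (c g)⁻¹ * A' g))
    (t : k) :
    ∃ t', ∀ f ∈ S, SgnEq (A f + c f * t) (A' f + c f * t') := by
  classical
  set r : α → k := fun f => -((c f)⁻¹ * A f) with hr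
  set r' : α → k := fun f => -((c f)⁻¹ * A' f) with hr'
  have hord : ∀ f ∈ S, ∀ g ∈ S, c f ≠ 0 → c g ≠ 0 → (r f < r g ↔ r' f < r' g) := by
    intro f hf g hg hcf hcg
    have h1 := (hp f hf g hg hcf hcg).1
    have e1 : (c f)⁻¹ * A f - (c g)⁻¹ * A g = r g - r f := by
      rw [hr]; dsimp only; rw [neg_sub_neg]
    have e2 : (c f)⁻¹ * A' f - (c g)⁻¹ * A' g = r' g - r' f := by
      rw [hr']; dsimp only; rw [neg_sub_neg]
    rw [e1, e2] at h1
    rw [← sub_pos, ← sub_pos (a := r' g)]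
    exact h1
  have heq : ∀ f ∈ S, ∀ g ∈ S, c f ≠ 0 → c g ≠ 0 → (r f = r g ↔ r' f = r' g) := by
    intro f hf g hg hcf hcg
    constructor
    · intro h
      by_contra hne
      rcases lt_or_gt_of_ne hne with h' | h'
      · exact absurd ((hord f hf g hg hcf hcg).2 h') (by rw [h]; exact lt_irrefl _)
      · exact absurd ((hord g hg f hf hcg hcf).2 h') (by rw [h]; exact lt_irrefl _)
    · intro h
      by_contra hne
      rcases lt_or_gt_of_ne hne with h' | h'
      · exact absurd ((hord f hf g hg hcf hcg).1 h') (by rw [h]; exact lt_irrefl _)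
      · exact absurd ((hord g hg f hf hcg hcf).1 h') (by rw [h]; exact lt_irrefl _)
  set P : Finset α := S.filter (fun f => c f ≠ 0) with hP
  have hPS : ∀ f ∈ P, f ∈ S := fun f hf => (Finset.mem_filter.1 hf).1
  have hPc : ∀ f ∈ P, c f ≠ 0 := fun f hf => (Finset.mem_filter.1 hf).2
  -- main construction: match the position of t among the roots
  have main : ∃ t', ∀ f ∈ P, SgnEq (t - r f) (t' - r' f) := by
    by_cases hE : ∃ f₀ ∈ P, r f₀ = t
    · obtain ⟨f₀, hf₀P, hf₀⟩ := hE
      refine ⟨r' f₀, fun f hf => ?_⟩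
      rcases lt_trichotomy (r f) t with h | h | h
      · have h1 : r f < r f₀ := by rw [hf₀]; exact h
        have h2 : r' f < r' f₀ := (hord f (hPS f hf) f₀ (hPS f₀ hf₀P) (hPc f hf) (hPc f₀ hf₀P)).1 h1
        exact SgnEq.of_pos_pos (sub_pos.2 h) (sub_pos.2 h2)
      · have h1 : r f = r f₀ := by rw [hf₀]; exact h
        have h2 : r' f = r' f₀ := (heq f (hPS f hf) f₀ (hPS f₀ hf₀P) (hPc f hf) (hPc f₀ hf₀P)).1 h1
        exact SgnEq.of_eq_eq (by rw [← h]; exact sub_self _) (by rw [← h2]; exact sub_self _)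
      · have h1 : r f₀ < r f := by rw [hf₀]; exact h
        have h2 : r' f₀ < r' f := (hord f₀ (hPS f₀ hf₀P) f (hPS f hf) (hPc f₀ hf₀P) (hPc f hf)).1 h1
        exact SgnEq.of_neg_neg (sub_neg.2 h) (sub_neg.2 h2)
    · push_neg at hE
      set L : Finset α := P.filter (fun f => r f < t) with hL
      set U : Finset α := P.filter (fun f => t < r f) with hU
      have hLU : ∀ f ∈ P, f ∈ L ∨ f ∈ U := by
        intro f hf
        rcases lt_trichotomy (r f) t with h | h | h
        · exact Or.inl (Finset.mem_filter.2 ⟨hf, h⟩)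
        · exact absurd h (hE f hf)
        · exact Or.inr (Finset.mem_filter.2 ⟨hf, h⟩)
      set L' : Finset k := L.image r' with hL'
      set U' : Finset k := U.image r' with hU'
      have key : ∃ t', (∀ a ∈ L', a < t') ∧ (∀ b ∈ U', t' < b) := by
        have hcomp : ∀ a ∈ L', ∀ b ∈ U', a < b := by
          intro a ha b hb
          obtain ⟨f, hfL, rfl⟩ := Finset.mem_image.1 ha
          obtain ⟨g, hgU, rfl⟩ := Finset.mem_image.1 hb
          have hfP := (Finset.mem_filter.1 hfL).1
          have hgP := (Finset.mem_filter.1 hgU).1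
          have : r f < r g := lt_trans (Finset.mem_filter.1 hfL).2 (Finset.mem_filter.1 hgU).2
          exact (hord f (hPS f hfP) g (hPS g hgP) (hPc f hfP) (hPc g hgP)).1 this
        rcases L'.eq_empty_or_nonempty with hLe | hLn
        · rcases U'.eq_empty_or_nonempty with hUe | hUn
          · exact ⟨0, by simp [hLe], by simp [hUe]⟩
          · refine ⟨U'.min' hUn - 1, by simp [hLe], fun b hb => ?_⟩
            calc U'.min' hUn - 1 < U'.min' hUn := sub_lt_self _ SL.zero_lt_one
              _ ≤ b := U'.min'_le b hb
        · rcases U'.eq_empty_or_nonempty with hUe | hUn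
          · refine ⟨L'.max' hLn + 1, fun a ha => ?_, by simp [hUe]⟩
            calc a ≤ L'.max' hLn := L'.le_max' a ha
              _ < L'.max' hLn + 1 := lt_add_of_pos_right _ SL.zero_lt_one
          · have hab : L'.max' hLn < U'.min' hUn :=
              hcomp _ (L'.max'_mem hLn) _ (U'.min'_mem hUn)
            obtain ⟨h1, h2⟩ := SL.midpoint hab
            refine ⟨(L'.max' hLn + U'.min' hUn) / 2, fun a ha => lt_of_le_of_lt (L'.le_max' a ha) h1,
              fun b hb => lt_of_lt_of_le h2 (U'.min'_le b hb)⟩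
      obtain ⟨t', ht'L, ht'U⟩ := key
      refine ⟨t', fun f hf => ?_⟩
      rcases hLU f hf with h | h
      · have h1 : r f < t := (Finset.mem_filter.1 h).2
        have h2 : r' f < t' := ht'L _ (Finset.mem_image.2 ⟨f, h, rfl⟩)
        exact SgnEq.of_pos_pos (sub_pos.2 h1) (sub_pos.2 h2)
      · have h1 : t < r f := (Finset.mem_filter.1 h).2
        have h2 : t' < r' f := ht'U _ (Finset.mem_image.2 ⟨f, h, rfl⟩)
        exact SgnEq.of_neg_neg (sub_neg.2 h1) (sub_neg.2 h2)
  obtain ⟨t', ht'⟩ := main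
  refine ⟨t', fun f hf => ?_⟩
  by_cases hc : c f = 0
  · have := h0 f hf hc
    simpa [hc] using this
  · have hfP : f ∈ P := Finset.mem_filter.2 ⟨hf, hc⟩
    have e : ∀ B u : k, c f * (u - (-((c f)⁻¹ * B))) = B + c f * u := by
      intro B u
      rw [sub_neg_eq_add, mul_add, ← mul_assoc, mul_inv_cancel₀ hc, one_mul, add_comm]
    have e1 : A f + c f * t = c f * (t - r f) := (e (A f) t).symm
    have e2 : A' f + c f * t' = c f * (t' - r' f) := (e (A' f) t').symm
    rw [e1, e2]
    exact SgnEq.mul_left hc (ht' f hfP)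

end Aux3

section Aux4

variable {k ι : Type*} [DivisionRing k] [LinearOrder k]
  [CovariantClass k k (· + ·) (· < ·)] [PosMulStrictMono k] [MulPosStrictMono k]

/-- Projection: forget the coordinates in `T`. -/
def projT (T : Finset ι) (Y : Set (ι →₀ k)) : Set (ι →₀ k) :=
  {x | ∃ y ∈ Y, ∀ i, i ∉ T → y i = x i}

lemma projT_empty (Y : Set (ι →₀ k)) : projT ∅ Y = Y := by
  ext x
  constructor
  · rintro ⟨y, hy, h⟩
    have : y = x := Finsupp.ext fun i => h i (Finset.notMem_empty i)
    rwa [← this]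
  · intro hx
    exact ⟨x, hx, fun _ _ => rfl⟩

lemma projT_insert (j : ι) (T : Finset ι) (Y : Set (ι →₀ k)) :
    projT (insert j T) Y = {x | ∃ t, x.update j t ∈ projT T Y} := by
  ext x
  constructor
  · rintro ⟨y, hy, h⟩
    refine ⟨y j, y, hy, fun i hi => ?_⟩
    by_cases hij : i = j
    · subst hij
      rw [Finsupp.coe_update, Function.update_self]
    · rw [Finsupp.coe_update, Function.update_of_ne hij]
      exact h i (by simp [Finset.mem_insert, hij, hi])
  · rintro ⟨t, y, hy, h⟩
    refine ⟨y, hy, fun i hi => ?_⟩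
    have hij : i ≠ j := fun h' => hi (h' ▸ Finset.mem_insert_self j T)
    have hiT : i ∉ T := fun h' => hi (Finset.mem_insert_of_mem h')
    rw [h i hiT, Finsupp.coe_update, Function.update_of_ne hij]

/-- Fourier–Motzkin elimination of a single coordinate. -/
lemma elimOne (F : Finset (ι →₀ k)) (j : ι) :
    ∃ F' : Finset (ι →₀ k),
      (∀ f ∈ F', f j = 0) ∧
      (∀ f ∈ F', ∀ i, (∀ g ∈ F, g i = 0) → f i = 0) ∧
      ∀ Y : Set (ι →₀ k), SgnInv F Y → SgnInv F' {x | ∃ t, x.update j t ∈ Y} := by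
  classical
  refine ⟨F.image (Finsupp.erase j) ∪
    (F ×ˢ F).image (fun p => (p.1 j)⁻¹ • p.1.erase j - (p.2 j)⁻¹ • p.2.erase j), ?_, ?_, ?_⟩
  · intro f hf
    rcases Finset.mem_union.1 hf with hf | hf
    · obtain ⟨g, _, rfl⟩ := Finset.mem_image.1 hf
      exact Finsupp.erase_same
    · obtain ⟨p, _, rfl⟩ := Finset.mem_image.1 hf
      simp [Finsupp.erase_same]
  · intro f hf i hall
    rcases Finset.mem_union.1 hf with hf | hf
    · obtain ⟨g, hg, rfl⟩ := Finset.mem_image.1 hf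
      by_cases hij : i = j
      · subst hij; exact Finsupp.erase_same
      · rw [Finsupp.erase_ne hij]; exact hall g hg
    · obtain ⟨p, hp, rfl⟩ := Finset.mem_image.1 hf
      have hp1 := (Finset.mem_product.1 hp).1
      have hp2 := (Finset.mem_product.1 hp).2
      by_cases hij : i = j
      · subst hij; simp [Finsupp.erase_same]
      · simp only [Finsupp.sub_apply, Finsupp.smul_apply, Finsupp.erase_ne hij,
          hall p.1 hp1, hall p.2 hp2, smul_zero, sub_zero]
  · intro Y hY
    have dir : ∀ x x' : ι →₀ k,
        (∀ f' ∈ F.image (Finsupp.erase j) ∪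
          (F ×ˢ F).image (fun p => (p.1 j)⁻¹ • p.1.erase j - (p.2 j)⁻¹ • p.2.erase j),
          SgnEq (pairing f' x) (pairing f' x')) →
        (∃ t, x.update j t ∈ Y) → ∃ t', x'.update j t' ∈ Y := by
      rintro x x' hs ⟨t, ht⟩
      obtain ⟨t', ht'⟩ := exists_matching_param F
        (fun f => pairing (f.erase j) x) (fun f => pairing (f.erase j) x') (fun f => f j)
        (fun f hf _ => hs _ (Finset.mem_union_left _ (Finset.mem_image.2 ⟨f, hf, rfl⟩)))
        (fun f hf g hg _ _ => by
          have hmem' : (f j)⁻¹ • f.erase j - (g j)⁻¹ • g.erase j ∈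
              (F ×ˢ F).image (fun p => (p.1 j)⁻¹ • p.1.erase j - (p.2 j)⁻¹ • p.2.erase j) :=
            Finset.mem_image.2 ⟨(f, g), Finset.mem_product.2 ⟨hf, hg⟩, rfl⟩
          have hmem := Finset.mem_union_right (F.image (Finsupp.erase j)) hmem' 
          have := hs _ hmem
          rwa [pairing_sub, pairing_sub, pairing_smul, pairing_smul, pairing_smul,
            pairing_smul] at this) t
      refine ⟨t', ?_⟩
      refine (hY (x.update j t) (x'.update j t') fun f hf => ?_).1 ht
      rw [pairing_update, pairing_update]
      exact ht' f hf
    intro x x' hs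
    constructor
    · exact dir x x' hs
    · exact dir x' x fun f hf => (hs f hf).symm

/-- Fourier–Motzkin elimination of a finite set of coordinates. -/
lemma elimMany (T : Finset ι) (F : Finset (ι →₀ k)) :
    ∃ F' : Finset (ι →₀ k),
      (∀ f ∈ F', ∀ i ∈ T, f i = 0) ∧
      (∀ f ∈ F', ∀ i, (∀ g ∈ F, g i = 0) → f i = 0) ∧
      ∀ Y : Set (ι →₀ k), SgnInv F Y → SgnInv F' (projT T Y) := by
  classical
  induction T using Finset.induction_on with
  | empty =>
      exact ⟨F, by simp, fun f hf i h => h f hf,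
        fun Y h => by rw [projT_empty]; exact h⟩
  | @insert j T hj ih =>
      obtain ⟨F₁, h1, h2, h3⟩ := ih
      obtain ⟨F', g1, g2, g3⟩ := elimOne F₁ j
      refine ⟨F', ?_, ?_, ?_⟩
      · intro f hf i hi
        rcases Finset.mem_insert.1 hi with rfl | hiT
        · exact g1 f hf
        · exact g2 f hf i fun g hg => h1 g hg i hiT
      · intro f hf i hall
        exact g2 f hf i fun g hg => h2 g hg i hall
      · intro Y hY
        rw [projT_insert]
        exact g3 _ (h3 Y hY)

end Aux4

section Main

variable {k ι : Type*} [DivisionRing k] [LinearOrder k]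
  [CovariantClass k k (· + ·) (· < ·)] [PosMulStrictMono k] [MulPosStrictMono k]

/-- Structural invariance: any set in `Bool(k^(I) ∪ D)` only depends on the coordinates in `I`
and on the signs of the functionals of `D`. -/
lemma memBool_invID {I : Set ι} {D : Set (ι →₀ k)} {W : Set (ι →₀ k)}
    (hW : MemBool (suppIn I ∪ D) Set.univ W) :
    ∀ x y : ι →₀ k, (∀ i ∈ I, x i = y i) →
      (∀ d ∈ D, SgnEq (pairing d x) (pairing d y)) → (x ∈ W ↔ y ∈ W) := by
  induction hW with
  | pos a ha =>
      intro x y hI hD'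
      rcases ha with hsupp | hd
      · have e : pairing a x = pairing a y :=
          pairing_congr fun i hi => hI i (by by_contra hiI; exact hi (hsupp i hiI))
        simp [Set.mem_setOf_eq, e]
      · simp only [Set.mem_setOf_eq, Set.mem_univ, true_and]
        exact (hD' a hd).1
  | neg a ha =>
      intro x y hI hD'
      rcases ha with hsupp | hd
      · have e : pairing a x = pairing a y :=
          pairing_congr fun i hi => hI i (by by_contra hiI; exact hi (hsupp i hiI))
        simp [Set.mem_setOf_eq, e]
      · simp only [Set.mem_setOf_eq, Set.mem_univ, true_and]
        exact (hD' a hd).2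
  | empty => intro x y _ _; simp
  | full => intro x y _ _; simp
  | union h1 h2 ih1 ih2 =>
      intro x y hI hD'
      simp only [Set.mem_union]
      exact or_congr (ih1 x y hI hD') (ih2 x y hI hD')
  | inter h1 h2 ih1 ih2 =>
      intro x y hI hD'
      simp only [Set.mem_inter_iff]
      exact and_congr (ih1 x y hI hD') (ih2 x y hI hD')
  | sdiff h1 h2 ih1 ih2 =>
      intro x y hI hD'
      simp only [Set.mem_diff]
      exact and_congr (ih1 x y hI hD') (not_congr (ih2 x y hI hD'))

/-- The least upper approximation exists. -/
lemma leastCover (I : Set ι) (D : Set (ι →₀ k)) (hD : D.Finite) (Y : Set (ι →₀ k))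
    (hY : MemBool (Set.univ : Set (ι →₀ k)) Set.univ Y) :
    ∃ Z : Set (ι →₀ k),
      IsLeast {W : Set (ι →₀ k) | MemBool (suppIn I ∪ D) Set.univ W ∧ Y ⊆ W} Z := by
  classical
  obtain ⟨F₀, hF₀⟩ := exists_inv_of_memBool hY
  set Dfin : Finset (ι →₀ k) := hD.toFinset with hDfin
  set G : Finset (ι →₀ k) := F₀ ∪ Dfin with hG
  set T : Finset ι := (G.sup Finsupp.support).filter (fun i => i ∉ I) with hT
  obtain ⟨G', hG'T, hG'supp, hG'inv⟩ := elimMany T G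
  have hG'sub : (↑G' : Set (ι →₀ k)) ⊆ suppIn I := by
    intro f hf i hiI
    by_cases hi : i ∈ G.sup Finsupp.support
    · exact hG'T f hf i (Finset.mem_filter.2 ⟨hi, hiI⟩)
    · refine hG'supp f hf i fun g hg => ?_
      by_contra hgi
      exact hi (Finset.mem_sup.2 ⟨g, hg, Finsupp.mem_support_iff.2 hgi⟩)
  have hYG : SgnInv G Y := hF₀.mono Finset.subset_union_left
  set Z : Set (ι →₀ k) := ⋃ σ ∈ (Finset.univ : Finset (Dfin → Ordering)),
    (projT T (Y ∩ cell Dfin σ) ∩ cell Dfin σ) with hZ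
  refine ⟨Z, ⟨?_, ?_⟩, ?_⟩
  · -- Z is in the subalgebra
    refine memBool_biUnion _ _ fun σ _ => ?_
    refine MemBool.inter ?_ ?_
    · refine inv_memBool (A := suppIn I ∪ D)
        (Set.Subset.trans hG'sub Set.subset_union_left) ?_
      exact hG'inv _ (hYG.inter ((inv_cell Dfin σ).mono Finset.subset_union_right))
    · refine memBool_cell ?_ σ
      rw [hDfin, hD.coe_toFinset]
      exact Set.subset_union_right
  · -- Y ⊆ Z
    intro x hx
    simp only [hZ, Set.mem_iUnion, exists_prop]
    refine ⟨fun d : Dfin => osgn (pairing d.1 x), Finset.mem_univ _,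
      ⟨x, ⟨hx, fun d => rfl⟩, fun i _ => rfl⟩, fun d => rfl⟩
  · -- Z is least
    rintro W ⟨hWB, hYW⟩
    intro x hx
    simp only [hZ, Set.mem_iUnion, exists_prop] at hx
    obtain ⟨σ, _, ⟨y, ⟨hyY, hycell⟩, hagree⟩, hxcell⟩ := hx
    refine (memBool_invID hWB y x ?_ ?_).1 (hYW hyY)
    · intro i hiI
      refine hagree i fun hiT => ?_
      exact (Finset.mem_filter.1 hiT).2 hiI
    · intro d hd
      have hdD : d ∈ Dfin := hD.mem_toFinset.2 hd
      refine sgnEq_iff_osgn.2 ?_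
      rw [hycell ⟨d, hdD⟩, hxcell ⟨d, hdD⟩]

end Main

/-- with `J = ι`, `I ⊆ J` and `D ⊆ k^(J)` finite, the Boolean algebra
`Bool(k^(I) ∪ D, k^(J))` is relatively complete in `Bool(k^(J), k^(J))`: every
`Y ∈ Bool(k^(J), k^(J))` has both a least upper approximation and a greatest lower
approximation in `Bool(k^(I) ∪ D, k^(J))` (with respect to `⊆`). -/
theorem stmt14 (k ι : Type*) [DivisionRing k] [LinearOrder k]
    [CovariantClass k k (· + ·) (· < ·)] [PosMulStrictMono k] [MulPosStrictMono k]
    (I : Set ι) (D : Set (ι →₀ k)) (hD : D.Finite) :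
    ∀ Y : Set (ι →₀ k), MemBool (Set.univ : Set (ι →₀ k)) Set.univ Y →
      (∃ Z : Set (ι →₀ k),
        IsLeast {W : Set (ι →₀ k) | MemBool (suppIn I ∪ D) Set.univ W ∧ Y ⊆ W} Z) ∧
      (∃ Z : Set (ι →₀ k),
        IsGreatest {W : Set (ι →₀ k) | MemBool (suppIn I ∪ D) Set.univ W ∧ W ⊆ Y} Z) := by
  intro Y hY
  constructor
  · exact leastCover I D hD Y hY
  · have hYc : MemBool (Set.univ : Set (ι →₀ k)) Set.univ (Set.univ \ Y) :=
      MemBool.sdiff MemBool.full hY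
    obtain ⟨Zc, ⟨⟨hZcB, hZcY⟩, hZcLeast⟩⟩ := leastCover I D hD (Set.univ \ Y) hYc
    refine ⟨Set.univ \ Zc, ⟨MemBool.sdiff MemBool.full hZcB, ?_⟩, ?_⟩
    · intro x hx
      by_contra hxY
      exact hx.2 (hZcY ⟨Set.mem_univ x, hxY⟩)
    · rintro W ⟨hWB, hWY⟩ x hxW
      refine ⟨Set.mem_univ x, fun hxZc => ?_⟩
      have hsub : Set.univ \ Y ⊆ Set.univ \ W := fun z hz => ⟨hz.1, fun hzW => hz.2 (hWY hzW)⟩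
      have : Zc ⊆ Set.univ \ W :=
        hZcLeast ⟨MemBool.sdiff MemBool.full hWB, hsub⟩
      exact (this hxZc).2 hxW
end

section
/- Let k be a totally ordered division ring, let I ⊊ J be sets with J∖I infinite, let L be a distributive 0-lattice, let D be a finite subset of k^(J), and let c ∈ L. Then for every top-faithful 0-lattice homomorphism f : Op(k^(I) ∪ D, k^(J)) → L ∪ {∞}, there exist e ∈ k^(J) and a top-faithful lattice homomorphism g : Op(k^(I) ∪ D ∪ {e}, k^(J)) → L ∪ {∞} extending f such that g(⟦e>0⟧) = c. -/
/-- Membership in `Op⁻(A, k^(ι))`: the sublattice of the powerset of `k^(ι)` generated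
by the sets `⟦a > 0⟧` and `⟦a < 0⟧` for `a ∈ A`. -/
inductive MemOp {k ι : Type*} [DivisionRing k] [LinearOrder k]
    (A : Set (ι →₀ k)) : Set (ι →₀ k) → Prop
  | pos (a : ι →₀ k) (ha : a ∈ A) : MemOp A {x : ι →₀ k | 0 < pairing a x}
  | neg (a : ι →₀ k) (ha : a ∈ A) : MemOp A {x : ι →₀ k | pairing a x < 0}
  | union {U V : Set (ι →₀ k)} : MemOp A U → MemOp A V → MemOp A (U ∪ V)
  | inter {U V : Set (ι →₀ k)} : MemOp A U → MemOp A V → MemOp A (U ∩ V)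

/-- Membership in `Op(A, k^(ι)) = Op⁻(A, k^(ι)) ∪ {k^(ι)}`, a bounded lattice with top
element the full space. -/
def MemOpTop {k ι : Type*} [DivisionRing k] [LinearOrder k]
    (A : Set (ι →₀ k)) (U : Set (ι →₀ k)) : Prop :=
  MemOp A U ∨ U = Set.univ

private lemma stmt16_distribAux {α : Type*} [DistribLattice α] (a₀ a₁ b₀ b₁ c : α)
    (ha : a₀ ≤ a₁) (hb : b₀ ≤ b₁) :
    ((a₁ ⊓ c) ⊔ a₀) ⊓ ((b₁ ⊓ c) ⊔ b₀) = ((a₁ ⊓ b₁) ⊓ c) ⊔ (a₀ ⊓ b₀) := by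
  apply le_antisymm
  · rw [inf_sup_right, inf_sup_left, inf_sup_left]
    apply sup_le (sup_le ?_ ?_) (sup_le ?_ ?_)
    · exact le_sup_of_le_left (le_inf (le_inf (inf_le_of_left_le inf_le_left)
        (inf_le_of_right_le inf_le_left)) (inf_le_of_left_le inf_le_right))
    · exact le_sup_of_le_left (le_inf (le_inf (inf_le_of_left_le inf_le_left)
        (inf_le_of_right_le hb)) (inf_le_of_left_le inf_le_right))
    · exact le_sup_of_le_left (le_inf (le_inf (inf_le_of_left_le ha)
        (inf_le_of_right_le inf_le_left)) (inf_le_of_right_le inf_le_right))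
    · exact le_sup_right
  · apply sup_le
    · exact le_inf (le_sup_of_le_left (le_inf (inf_le_of_left_le inf_le_left) inf_le_right))
        (le_sup_of_le_left (le_inf (inf_le_of_left_le inf_le_right) inf_le_right))
    · exact le_inf (le_sup_of_le_right inf_le_left) (le_sup_of_le_right inf_le_right)

private lemma stmt16_supTop {L : Type*} [DistribLattice L] (a b : WithTop L)
    (h : a ⊔ b = ⊤) (ha : a ≠ ⊤) : b = ⊤ := by
  induction a using WithTop.recTopCoe with
  | top => exact absurd rfl ha
  | coe a =>
    induction b using WithTop.recTopCoe with
    | top => rfl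
    | coe b => rw [← WithTop.coe_sup] at h; exact absurd h (WithTop.coe_ne_top)

/-- surjectivity step: with `J = ι`, `I ⊊ J` with `J∖I` infinite, a
distributive `0`-lattice `L`, a finite `D ⊆ k^(J)` and `c ∈ L`, for every top-faithful
`0`-lattice homomorphism `f : Op(k^(I) ∪ D, k^(J)) → L ∪ {∞}` there are `e ∈ k^(J)` and
a top-faithful lattice homomorphism `g : Op(k^(I) ∪ D ∪ {e}, k^(J)) → L ∪ {∞}` extending
`f` with `g ⟦e > 0⟧ = c`. -/
theorem stmt16 (k ι : Type*) [DivisionRing k] [LinearOrder k]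
    [CovariantClass k k (· + ·) (· < ·)] [PosMulStrictMono k] [MulPosStrictMono k]
    (I : Set ι) (hIne : I ≠ Set.univ) (hIinf : (Set.univ \ I).Infinite)
    (L : Type*) [DistribLattice L] [OrderBot L]
    (D : Set (ι →₀ k)) (hD : D.Finite) (c : L)
    (f : Set (ι →₀ k) → WithTop L)
    (hf : ∀ U V : Set (ι →₀ k), MemOpTop (suppIn I ∪ D) U → MemOpTop (suppIn I ∪ D) V →
      f (U ∪ V) = f U ⊔ f V ∧ f (U ∩ V) = f U ⊓ f V)
    (hf0 : f ∅ = ⊥)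
    (hftf : ∀ U : Set (ι →₀ k), MemOpTop (suppIn I ∪ D) U → (f U = ⊤ ↔ U = Set.univ)) :
    ∃ (e : ι →₀ k) (g : Set (ι →₀ k) → WithTop L),
      (∀ U V : Set (ι →₀ k),
        MemOpTop (suppIn I ∪ D ∪ {e}) U → MemOpTop (suppIn I ∪ D ∪ {e}) V →
        g (U ∪ V) = g U ⊔ g V ∧ g (U ∩ V) = g U ⊓ g V) ∧
      (∀ U : Set (ι →₀ k), MemOpTop (suppIn I ∪ D ∪ {e}) U → (g U = ⊤ ↔ U = Set.univ)) ∧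
      (∀ U : Set (ι →₀ k), MemOpTop (suppIn I ∪ D) U → g U = f U) ∧
      g {x : ι →₀ k | 0 < pairing e x} = (c : WithTop L) := by
  
  classical
  set A : Set (ι →₀ k) := suppIn I ∪ D with hA
  -- choose a fresh coordinate j
  obtain ⟨j, hj⟩ := (hIinf.diff (Set.Finite.biUnion hD
    (fun d _ => d.support.finite_toSet))).nonempty
  have hjI : j ∉ I := fun h => hj.1.2 h
  have hjD : ∀ d ∈ D, d j = 0 := by
    intro d hd
    by_contra hne
    exact hj.2 (Set.mem_biUnion hd (Finsupp.mem_support_iff.mpr hne))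
  -- a positive scalar
  obtain ⟨s, hs⟩ : ∃ s : k, 0 < s := by
    rcases lt_trichotomy (0 : k) 1 with h | h | h
    · exact ⟨1, h⟩
    · exact absurd h.symm one_ne_zero
    · refine ⟨-1, ?_⟩
      have := add_lt_add_left h (-1)
      simpa using this
  set e : ι →₀ k := Finsupp.single j s with he
  have haj : ∀ a ∈ A, a j = 0 := by
    rintro a (ha | ha)
    · exact ha j hjI
    · exact hjD a ha
  -- updating coordinate j does not change old pairings
  have hupd : ∀ (x : ι →₀ k) (t : k) (i : ι), i ≠ j → (x.update j t) i = x i := by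
    intro x t i hij
    rw [Finsupp.coe_update]
    simp [Function.update_apply, hij]
  have hpair : ∀ a ∈ A, ∀ (x : ι →₀ k) (t : k), pairing a (x.update j t) = pairing a x := by
    intro a ha x t
    apply Finsupp.sum_congr
    intro i hi
    have hij : i ≠ j := fun h => (Finsupp.mem_support_iff.mp hi) (h ▸ haj a ha)
    rw [hupd x t i hij]
  have hpe : ∀ (x : ι →₀ k) (t : k), pairing e (x.update j t) = s * t := by
    intro x t
    have h1 : pairing e (x.update j t) = s * (x.update j t) j :=
      Finsupp.sum_single_index (by simp)
    rw [h1, Finsupp.coe_update]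
    simp
  -- sections
  set sec : k → Set (ι →₀ k) → Set (ι →₀ k) :=
    fun t S => (fun x : ι →₀ k => x.update j t) ⁻¹' S with hsec
  have emptyMem : MemOp A (∅ : Set (ι →₀ k)) := by
    have h0 : (0 : ι →₀ k) ∈ A := Or.inl (fun i _ => rfl)
    have := MemOp.pos (A := A) 0 h0
    have hset : {x : ι →₀ k | 0 < pairing 0 x} = (∅ : Set (ι →₀ k)) := by
      ext x; simp [pairing]
    rwa [hset] at this
  have topUnion : ∀ {U V : Set (ι →₀ k)}, MemOpTop A U → MemOpTop A V → MemOpTop A (U ∪ V) := by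
    rintro U V (hU | rfl) (hV | rfl)
    · exact Or.inl (MemOp.union hU hV)
    · exact Or.inr (Set.union_univ U)
    · exact Or.inr (Set.univ_union V)
    · exact Or.inr (Set.univ_union _)
  have topInter : ∀ {U V : Set (ι →₀ k)}, MemOpTop A U → MemOpTop A V → MemOpTop A (U ∩ V) := by
    rintro U V (hU | rfl) (hV | rfl)
    · exact Or.inl (MemOp.inter hU hV)
    · rw [Set.inter_univ]; exact Or.inl hU
    · rw [Set.univ_inter]; exact Or.inl hV
    · exact Or.inr (Set.univ_inter _)
  -- main induction
  have main : ∀ S, MemOp (A ∪ {e}) S →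
      MemOpTop A (sec s S) ∧ MemOpTop A (sec 0 S) ∧ ∀ t, sec 0 S ⊆ sec t S := by
    intro S hS
    induction hS with
    | pos a ha =>
      rcases ha with ha | ha
      · have hsame : ∀ t, sec t {x : ι →₀ k | 0 < pairing a x} = {x : ι →₀ k | 0 < pairing a x} := by
          intro t; ext x
          simp [hsec, Set.preimage_setOf_eq, hpair a ha]
        refine ⟨?_, ?_, ?_⟩
        · rw [hsame]; exact Or.inl (MemOp.pos a ha)
        · rw [hsame]; exact Or.inl (MemOp.pos a ha)
        · intro t; rw [hsame, hsame]
      · rw [Set.mem_singleton_iff] at ha; subst ha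
        have h1 : sec s {x : ι →₀ k | 0 < pairing e x} = Set.univ := by
          apply Set.eq_univ_of_forall
          intro x
          show 0 < pairing e (x.update j s)
          rw [hpe]; exact mul_pos hs hs
        have h0 : sec 0 {x : ι →₀ k | 0 < pairing e x} = ∅ := by
          ext x
          simp only [Set.mem_empty_iff_false, iff_false]
          show ¬ 0 < pairing e (x.update j 0)
          rw [hpe]; simp
        refine ⟨Or.inr h1, h0 ▸ Or.inl emptyMem, ?_⟩
        intro t; rw [h0]; exact Set.empty_subset _
    | neg a ha =>
      rcases ha with ha | ha
      · have hsame : ∀ t, sec t {x : ι →₀ k | pairing a x < 0} = {x : ι →₀ k | pairing a x < 0} := by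
          intro t; ext x
          simp [hsec, Set.preimage_setOf_eq, hpair a ha]
        refine ⟨?_, ?_, ?_⟩
        · rw [hsame]; exact Or.inl (MemOp.neg a ha)
        · rw [hsame]; exact Or.inl (MemOp.neg a ha)
        · intro t; rw [hsame, hsame]
      · rw [Set.mem_singleton_iff] at ha; subst ha
        have h1 : sec s {x : ι →₀ k | pairing e x < 0} = ∅ := by
          ext x
          simp only [Set.mem_empty_iff_false, iff_false]
          show ¬ pairing e (x.update j s) < 0
          rw [hpe]; exact asymm (mul_pos hs hs)
        have h0 : sec 0 {x : ι →₀ k | pairing e x < 0} = ∅ := by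
          ext x
          simp only [Set.mem_empty_iff_false, iff_false]
          show ¬ pairing e (x.update j 0) < 0
          rw [hpe]; simp
        refine ⟨h1 ▸ Or.inl emptyMem, h0 ▸ Or.inl emptyMem, ?_⟩
        intro t; rw [h0]; exact Set.empty_subset _
    | union hU hV ihU ihV =>
      exact ⟨topUnion ihU.1 ihV.1, topUnion ihU.2.1 ihV.2.1,
        fun t => Set.union_subset_union (ihU.2.2 t) (ihV.2.2 t)⟩
    | inter hU hV ihU ihV =>
      exact ⟨topInter ihU.1 ihV.1, topInter ihU.2.1 ihV.2.1,
        fun t => Set.inter_subset_inter (ihU.2.2 t) (ihV.2.2 t)⟩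
  have main' : ∀ S, MemOpTop (A ∪ {e}) S →
      MemOpTop A (sec s S) ∧ MemOpTop A (sec 0 S) ∧ ∀ t, sec 0 S ⊆ sec t S := by
    rintro S (hS | rfl)
    · exact main S hS
    · exact ⟨Or.inr rfl, Or.inr rfl, fun t => (Set.preimage_univ (f := fun x : ι →₀ k => x.update j 0)) ▸ Set.subset_univ _⟩
  -- old sets are unchanged by sections
  have secId : ∀ S, MemOp A S → ∀ t, sec t S = S := by
    intro S hS
    induction hS with
    | pos a ha => intro t; ext x; simp [hsec, Set.preimage_setOf_eq, hpair a ha]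
    | neg a ha => intro t; ext x; simp [hsec, Set.preimage_setOf_eq, hpair a ha]
    | union hU hV ihU ihV => exact fun t => congrArg₂ (· ∪ ·) (ihU t) (ihV t)
    | inter hU hV ihU ihV => exact fun t => congrArg₂ (· ∩ ·) (ihU t) (ihV t)
  have secId' : ∀ S, MemOpTop A S → ∀ t, sec t S = S := by
    rintro S (hS | rfl)
    · exact secId S hS
    · intro t; exact Set.preimage_univ
  have fmono : ∀ U V : Set (ι →₀ k), MemOpTop A U → MemOpTop A V → U ⊆ V → f U ≤ f V := by
    intro U V hU hV hUV
    have h := (hf U V hU hV).1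
    rw [Set.union_eq_self_of_subset_left hUV] at h
    exact le_sup_left.trans h.ge
  have ftop : f Set.univ = ⊤ := (hftf Set.univ (Or.inr rfl)).mpr rfl
  -- definition of g
  refine ⟨e, fun S => (f (sec s S) ⊓ (c : WithTop L)) ⊔ f (sec 0 S), ?_, ?_, ?_, ?_⟩
  · -- lattice homomorphism
    intro U V hU hV
    obtain ⟨hUs, hU0, hUsub⟩ := main' U hU
    obtain ⟨hVs, hV0, hVsub⟩ := main' V hV
    constructor
    · show (f (sec s (U ∪ V)) ⊓ (c : WithTop L)) ⊔ f (sec 0 (U ∪ V)) = _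
      have e1 : sec s (U ∪ V) = sec s U ∪ sec s V := Set.preimage_union
      have e2 : sec 0 (U ∪ V) = sec 0 U ∪ sec 0 V := Set.preimage_union
      rw [e1, e2, (hf _ _ hUs hVs).1, (hf _ _ hU0 hV0).1, inf_sup_right, sup_sup_sup_comm]
    · show (f (sec s (U ∩ V)) ⊓ (c : WithTop L)) ⊔ f (sec 0 (U ∩ V)) = _
      have e1 : sec s (U ∩ V) = sec s U ∩ sec s V := Set.preimage_inter
      have e2 : sec 0 (U ∩ V) = sec 0 U ∩ sec 0 V := Set.preimage_inter
      rw [e1, e2, (hf _ _ hUs hVs).2, (hf _ _ hU0 hV0).2]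
      exact (stmt16_distribAux _ _ _ _ _ (fmono _ _ hU0 hUs (hUsub s))
        (fmono _ _ hV0 hVs (hVsub s))).symm
  · -- top-faithful
    intro U hU
    obtain ⟨hUs, hU0, hUsub⟩ := main' U hU
    constructor
    · intro h
      have h1 : f (sec s U) ⊓ (c : WithTop L) ≠ ⊤ :=
        ne_top_of_le_ne_top (WithTop.coe_ne_top) inf_le_right
      have h2 : f (sec 0 U) = ⊤ := stmt16_supTop _ _ h h1
      have h3 : sec 0 U = Set.univ := (hftf _ hU0).mp h2
      apply Set.eq_univ_of_forall
      intro x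
      have hx : x ∈ sec 0 U := h3 ▸ Set.mem_univ x
      have hx2 : x ∈ sec (x j) U := hUsub (x j) hx
      have : x.update j (x j) ∈ U := hx2
      rwa [Finsupp.update_self] at this
    · rintro rfl
      show (f (sec s Set.univ) ⊓ (c : WithTop L)) ⊔ f (sec 0 Set.univ) = ⊤
      have h0 : sec 0 (Set.univ : Set (ι →₀ k)) = Set.univ := rfl
      rw [h0, ftop, sup_top_eq]
  · -- extends f
    intro U hU
    show (f (sec s U) ⊓ (c : WithTop L)) ⊔ f (sec 0 U) = f U
    rw [secId' U hU s, secId' U hU 0]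
    exact sup_eq_right.mpr inf_le_left
  · -- value on the new generator
    have h1 : sec s {x : ι →₀ k | 0 < pairing e x} = Set.univ := by
      apply Set.eq_univ_of_forall
      intro x
      show 0 < pairing e (x.update j s)
      rw [hpe]; exact mul_pos hs hs
    have h0 : sec 0 {x : ι →₀ k | 0 < pairing e x} = ∅ := by
      ext x
      simp only [Set.mem_empty_iff_false, iff_false]
      show ¬ 0 < pairing e (x.update j 0)
      rw [hpe]; simp
    show (f (sec s {x : ι →₀ k | 0 < pairing e x}) ⊓ (c : WithTop L)) ⊔
      f (sec 0 {x : ι →₀ k | 0 < pairing e x}) = (c : WithTop L)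
    rw [h1, h0, ftop, hf0, top_inf_eq, sup_bot_eq]
end

section
/- Let D be a distributive 0-lattice with Boolean envelope BR(D). Then: (1) for all a₁, a₂, b₁, b₂ ∈ D, the inequality a₁ ∧ ¬b₁ ≤ a₂ ∧ ¬b₂ holds in BR(D) if and only if a₁ ≤ a₂ ∨ b₁ and a₁ ∧ b₂ ≤ b₁ hold in D; (2) if D is finite, then for all a, b ∈ D, a ∧ ¬b = ⋁{p ∧ ¬p_* : p ∈ Ji(D), p ≤ a, p ≰ b} in BR(D). -/
/-- Membership in the generalized Boolean subalgebra generated by a subset `S`. -/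
inductive GBAClosure {C : Type*} [GeneralizedBooleanAlgebra C] (S : Set C) : C → Prop
  | base {x : C} (hx : x ∈ S) : GBAClosure S x
  | bot : GBAClosure S ⊥
  | sup {x y : C} : GBAClosure S x → GBAClosure S y → GBAClosure S (x ⊔ y)
  | inf {x y : C} : GBAClosure S x → GBAClosure S y → GBAClosure S (x ⊓ y)
  | sdiff {x y : C} : GBAClosure S x → GBAClosure S y → GBAClosure S (x \ y)

/-- basic facts about the Boolean envelope `BR(D)` of a distributive
`0`-lattice `D`.  The envelope is represented by a generalized Boolean algebra `C`
together with a `0`-lattice embedding `j : D → C` whose range generates `C`; the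
element `a ∧ ¬b` of `BR(D)` is `j a \ j b`.  In part (2), `pstar p` denotes the unique
lower cover `p_*` of a join-irreducible `p` (the greatest element strictly below `p`),
and the finite join is expressed as a least upper bound. -/
theorem stmt17 {D C : Type*} [DistribLattice D] [OrderBot D]
    [GeneralizedBooleanAlgebra C]
    (j : D → C) (hjinj : Function.Injective j)
    (hjhom : ∀ x y : D, j (x ⊔ y) = j x ⊔ j y ∧ j (x ⊓ y) = j x ⊓ j y)
    (hjbot : j ⊥ = ⊥)
    (hjgen : ∀ c : C, GBAClosure (Set.range j) c) :
    (∀ a₁ a₂ b₁ b₂ : D,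
      j a₁ \ j b₁ ≤ j a₂ \ j b₂ ↔ (a₁ ≤ a₂ ⊔ b₁ ∧ a₁ ⊓ b₂ ≤ b₁)) ∧
    (Finite D → ∀ pstar : D → D,
      (∀ p : D, SupIrred p → IsGreatest {x : D | x < p} (pstar p)) →
      ∀ a b : D,
        IsLUB {c : C | ∃ p : D, SupIrred p ∧ p ≤ a ∧ ¬ p ≤ b ∧ c = j p \ j (pstar p)}
          (j a \ j b)) := by
  have hsup : ∀ x y : D, j (x ⊔ y) = j x ⊔ j y := fun x y => (hjhom x y).1
  have hinf : ∀ x y : D, j (x ⊓ y) = j x ⊓ j y := fun x y => (hjhom x y).2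
  have hmono : ∀ {x y : D}, x ≤ y → j x ≤ j y := by
    intro x y h
    have : j x ⊔ j y = j y := by rw [← hsup, sup_eq_right.mpr h]
    exact sup_eq_right.mp this
  have hrefl : ∀ {x y : D}, j x ≤ j y → x ≤ y := by
    intro x y h
    have : j (x ⊔ y) = j y := by rw [hsup, sup_eq_right.mpr h]
    exact sup_eq_right.mp (hjinj this)
  have main : ∀ a₁ a₂ b₁ b₂ : D,
      j a₁ \ j b₁ ≤ j a₂ \ j b₂ ↔ (a₁ ≤ a₂ ⊔ b₁ ∧ a₁ ⊓ b₂ ≤ b₁) := by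
    intro a₁ a₂ b₁ b₂
    constructor
    · intro h
      constructor
      · apply hrefl
        rw [hsup]
        calc j a₁ = j a₁ ⊓ j b₁ ⊔ j a₁ \ j b₁ := (sup_inf_sdiff _ _).symm
          _ ≤ j a₂ ⊔ j b₁ :=
            sup_le (inf_le_right.trans le_sup_right)
              ((h.trans sdiff_le).trans le_sup_left)
      · apply hrefl
        rw [hinf]
        have hdisj : Disjoint (j a₁ \ j b₁) (j b₂) :=
          disjoint_sdiff_self_left.mono_left h
        calc j a₁ ⊓ j b₂ = (j a₁ ⊓ j b₁ ⊔ j a₁ \ j b₁) ⊓ j b₂ := by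
              rw [sup_inf_sdiff]
          _ = j a₁ ⊓ j b₁ ⊓ j b₂ ⊔ (j a₁ \ j b₁) ⊓ j b₂ := inf_sup_right _ _ _
          _ ≤ j b₁ ⊔ ⊥ :=
            sup_le_sup (inf_le_left.trans inf_le_right) hdisj.le_bot
          _ = j b₁ := sup_bot_eq _
    · rintro ⟨h1, h2⟩
      have hle : j a₁ \ j b₁ ≤ j a₂ := by
        rw [sdiff_le_iff, sup_comm, ← hsup]
        exact hmono h1
      have hdisj : Disjoint (j a₁ \ j b₁) (j b₂) := by
        rw [disjoint_iff_inf_le]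
        calc j a₁ \ j b₁ ⊓ j b₂ ≤ (j a₁ ⊓ j b₂) \ j b₁ :=
              le_sdiff.mpr ⟨inf_le_inf sdiff_le le_rfl,
                disjoint_sdiff_self_left.mono_left inf_le_left⟩
          _ = j (a₁ ⊓ b₂) \ j b₁ := by rw [hinf]
          _ ≤ j b₁ \ j b₁ := sdiff_le_sdiff_right (hmono h2)
          _ = ⊥ := sdiff_self
      exact le_sdiff.mpr ⟨hle, hdisj⟩
  refine ⟨main, ?_⟩
  intro hfin pstar hpst a b
  constructor
  · rintro c ⟨p, hp, hpa, hpb, rfl⟩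
    refine (main p a (pstar p) b).mpr ⟨le_sup_of_le_left hpa, ?_⟩
    refine (hpst p hp).2 ?_
    exact lt_of_le_of_ne inf_le_left (fun heq => hpb (heq ▸ inf_le_right))
  · intro u hu
    haveI : WellFoundedLT D := Finite.to_wellFoundedLT
    have key : ∀ x : D, x ≤ a → j x ≤ j b ⊔ u := by
      intro x
      induction x using WellFoundedLT.induction with
      | _ x IH =>
        intro hxa
        by_cases hx : SupIrred x
        · by_cases hxb : x ≤ b
          · exact (hmono hxb).trans le_sup_left
          · have hub : j x \ j (pstar x) ≤ u := hu ⟨x, hx, hxa, hxb, rfl⟩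
            have hlt : pstar x < x := (hpst x hx).1
            have hIH : j (pstar x) ≤ j b ⊔ u := IH _ hlt (hlt.le.trans hxa)
            calc j x = j x ⊓ j (pstar x) ⊔ j x \ j (pstar x) :=
                  (sup_inf_sdiff _ _).symm
              _ ≤ (j b ⊔ u) ⊔ u :=
                  sup_le_sup (inf_le_right.trans hIH) hub
              _ = j b ⊔ u := by rw [sup_assoc, sup_idem]
        · by_cases hmin : IsMin x
          · rw [hmin.eq_bot, hjbot]
            exact bot_le
          · have hex : ¬ ∀ ⦃y z : D⦄, y ⊔ z = x → y = x ∨ z = x :=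
              fun h => hx ⟨hmin, h⟩
            push_neg at hex
            obtain ⟨y, z, hyz, hy, hz⟩ := hex
            have hy' : y < x := lt_of_le_of_ne (le_sup_left.trans_eq hyz) hy
            have hz' : z < x := lt_of_le_of_ne (le_sup_right.trans_eq hyz) hz
            calc j x = j y ⊔ j z := by rw [← hsup, hyz]
              _ ≤ j b ⊔ u :=
                sup_le (IH _ hy' (hy'.le.trans hxa)) (IH _ hz' (hz'.le.trans hxa))
    rw [sdiff_le_iff]
    exact key a le_rfl
end

section
/- Let D and L be distributive 0-lattices with D finite, let φ : D → L be a 0-lattice homomorphism, let a, b ∈ D, and let c ∈ L. Then φ(a) ≤ φ(b) ∨ c if and only if φ(p) ≤ φ(p_*) ∨ c for every join-irreducible p ∈ Ji(D) with p ≤ a and p ≰ b. -/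
/-- for a `0`-lattice homomorphism `φ : D → L` from a finite distributive
lattice `D` to a distributive `0`-lattice `L`, and `a b : D`, `c : L`, one has
`φ a ≤ φ b ⊔ c` iff `φ p ≤ φ p_* ⊔ c` for every join-irreducible `p ≤ a` with `p ≰ b`.
Here `pstar p` denotes the unique lower cover `p_*` of a join-irreducible `p`,
characterized as the greatest element strictly below `p`. -/
theorem stmt18 {D L : Type*} [DistribLattice D] [OrderBot D] [Finite D]
    [DistribLattice L] [OrderBot L]
    (φ : D → L)
    (hφ : ∀ x y : D, φ (x ⊔ y) = φ x ⊔ φ y ∧ φ (x ⊓ y) = φ x ⊓ φ y)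
    (hφ0 : φ ⊥ = ⊥)
    (pstar : D → D) (hpstar : ∀ p : D, SupIrred p → IsGreatest {x : D | x < p} (pstar p))
    (a b : D) (c : L) :
    φ a ≤ φ b ⊔ c ↔ ∀ p : D, SupIrred p → p ≤ a → ¬ p ≤ b → φ p ≤ φ (pstar p) ⊔ c := by
  have hmono : ∀ x y : D, x ≤ y → φ x ≤ φ y := by
    intro x y hxy
    have h := (hφ x y).1
    rw [sup_eq_right.mpr hxy] at h
    rw [h]; exact le_sup_left
  constructor
  · intro h p hp hpa hpb
    have h1 : φ p ≤ φ b ⊔ c := (hmono p a hpa).trans h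
    have h2 : φ p = (φ p ⊓ φ b) ⊔ (φ p ⊓ c) := by
      rw [← inf_sup_left, inf_eq_left.mpr h1]
    have h3 : p ⊓ b ≤ pstar p := (hpstar p hp).2 (inf_lt_left.2 hpb)
    calc φ p = (φ p ⊓ φ b) ⊔ (φ p ⊓ c) := h2
      _ ≤ φ (pstar p) ⊔ c := by
          refine sup_le_sup ?_ inf_le_right
          rw [← (hφ p b).2]
          exact hmono _ _ h3
  · have : WellFoundedLT D := Finite.to_wellFoundedLT
    induction a using WellFoundedLT.induction with
    | _ a IH =>
      intro h
      by_cases hab : a ≤ b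
      · exact le_sup_of_le_left (hmono a b hab)
      by_cases hirr : SupIrred a
      · have hlt : pstar a < a := (hpstar a hirr).1
        have hps : φ (pstar a) ≤ φ b ⊔ c :=
          IH (pstar a) hlt (fun p hp hpa hpb => h p hp (hpa.trans hlt.le) hpb)
        have := h a hirr le_rfl hab
        calc φ a ≤ φ (pstar a) ⊔ c := this
          _ ≤ (φ b ⊔ c) ⊔ c := sup_le_sup_right hps c
          _ = φ b ⊔ c := by rw [sup_assoc, sup_idem]
      · rw [SupIrred] at hirr
        push_neg at hirr
        have hnbot : ¬ IsMin a := by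
          intro hm
          exact hab (hm.eq_bot ▸ bot_le)
        obtain ⟨x, y, hxy, hx, hy⟩ := hirr hnbot
        have hxa : x < a := lt_of_le_of_ne (hxy ▸ le_sup_left) hx
        have hya : y < a := lt_of_le_of_ne (hxy ▸ le_sup_right) hy
        have h1 := IH x hxa (fun p hp hpa hpb => h p hp (hpa.trans hxa.le) hpb)
        have h2 := IH y hya (fun p hp hpa hpb => h p hp (hpa.trans hya.le) hpb)
        calc φ a = φ x ⊔ φ y := by rw [← hxy, (hφ x y).1]
          _ ≤ φ b ⊔ c := sup_le h1 h2
end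

section
/- Let D and E be finite distributive lattices and let φ : D → E be a 0,1-lattice homomorphism. Then: (1) φ is a homomorphism of Heyting algebras (i.e., preserves relative pseudocomplements) if and only if for all p ∈ Ji(D) and q ∈ Ji(E), p ≤ q^φ implies that there exists x ∈ Ji(E) with x ≤ q and x^φ = p; (2) φ is closed if and only if for all p ∈ Ji(D) and q ∈ Ji(E), q^φ ≤ p implies that there exists x ∈ Ji(E) with q ≤ x and x^φ = p. -/
private lemma aux_le_of_forall_supIrred {α : Type*} [Lattice α] [OrderBot α] [Finite α]
    {a b : α} (h : ∀ p, SupIrred p → p ≤ a → p ≤ b) : a ≤ b := by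
  obtain ⟨s, hs, hirr⟩ := exists_supIrred_decomposition a
  rw [← hs]
  exact Finset.sup_le fun p hp => h p (hirr hp) (hs ▸ Finset.le_sup (f := id) hp)

private lemma aux_exists_greatest_not_le {α : Type*} [DistribLattice α] [OrderBot α] [Finite α]
    {p : α} (hp : SupIrred p) : ∃ b, ¬ p ≤ b ∧ ∀ y, ¬ p ≤ y → y ≤ b := by
  classical
  haveI := Fintype.ofFinite α
  refine ⟨(Finset.univ.filter (fun y => ¬ p ≤ y)).sup id, ?_, ?_⟩
  · intro h
    obtain ⟨i, hi, hpi⟩ := hp.supPrime.le_finset_sup.1 h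
    exact (Finset.mem_filter.1 hi).2 hpi
  · intro y hy
    exact Finset.le_sup (f := id) (Finset.mem_filter.2 ⟨Finset.mem_univ _, hy⟩)

/-- Birkhoff-dual characterizations, for a `0,1`-lattice homomorphism
`φ : D → E` between finite distributive lattices, of (1) being a homomorphism of Heyting
algebras (preserving relative pseudocomplements), and (2) being closed.
Here `dual q = q^φ = min {x : q ≤ φ x}` is the Birkhoff dual of `φ`. -/
theorem stmt19 {D E : Type*} [DistribLattice D] [BoundedOrder D] [Finite D]
    [DistribLattice E] [BoundedOrder E] [Finite E]
    (φ : D → E)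
    (hφ : ∀ x y : D, φ (x ⊔ y) = φ x ⊔ φ y ∧ φ (x ⊓ y) = φ x ⊓ φ y)
    (hφ0 : φ ⊥ = ⊥) (hφ1 : φ ⊤ = ⊤)
    (dual : E → D) (hdual : ∀ q : E, SupIrred q → IsLeast {x : D | q ≤ φ x} (dual q)) :
    ((∀ x y z : D, IsGreatest {w : D | x ⊓ w ≤ y} z →
        IsGreatest {w : E | φ x ⊓ w ≤ φ y} (φ z)) ↔
      (∀ p : D, ∀ q : E, SupIrred p → SupIrred q → p ≤ dual q →
        ∃ x : E, SupIrred x ∧ x ≤ q ∧ dual x = p)) ∧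
    ((∀ a₀ a₁ : D, ∀ b : E, φ a₀ ≤ φ a₁ ⊔ b → ∃ x : D, a₀ ≤ a₁ ⊔ x ∧ φ x ≤ b) ↔
      (∀ p : D, ∀ q : E, SupIrred p → SupIrred q → dual q ≤ p →
        ∃ x : E, SupIrred x ∧ q ≤ x ∧ dual x = p)) := by
  classical
  have hmono : Monotone φ := fun a b hab => by
    have h := (hφ a b).2
    rw [inf_eq_left.2 hab] at h
    exact h.le.trans inf_le_right
  have hgal : ∀ (q : E) (x : D), SupIrred q → (q ≤ φ x ↔ dual q ≤ x) := by
    intro q x hq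
    exact ⟨fun h => (hdual q hq).2 h, fun h => (hdual q hq).1.trans (hmono h)⟩
  constructor
  · constructor
    · -- Heyting ⇒ p-morphism (down)
      intro H p q hp hq hpq
      by_contra hno
      push_neg at hno
      obtain ⟨bp, hbp1, hbp2⟩ := aux_exists_greatest_not_le hp
      have hG : IsGreatest {w : D | p ⊓ w ≤ bp} bp := by
        refine ⟨inf_le_right, fun w hw => ?_⟩
        by_cases hpw : p ≤ w
        · exact absurd (le_trans (le_inf le_rfl hpw) hw) hbp1
        · exact hbp2 w hpw
      have hGE := H p bp bp hG
      have hkey : φ p ⊓ q ≤ φ bp := by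
        apply aux_le_of_forall_supIrred
        intro x hx hxle
        have hx1 : x ≤ φ p := hxle.trans inf_le_left
        have hx2 : x ≤ q := hxle.trans inf_le_right
        have hd : dual x ≤ p := (hgal x p hx).1 hx1
        have hne : dual x ≠ p := hno x hx hx2
        have hdbp : dual x ≤ bp := hbp2 _ (fun hle => hne (le_antisymm hd hle))
        exact le_trans (hdual x hx).1 (hmono hdbp)
      have hq' : q ≤ φ bp := hGE.2 hkey
      exact hbp1 (hpq.trans ((hgal q bp hq).1 hq'))
    · -- p-morphism (down) ⇒ Heyting
      intro H x y z hz
      constructor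
      · show φ x ⊓ φ z ≤ φ y
        rw [← (hφ x z).2]
        exact hmono hz.1
      · intro w hw
        apply aux_le_of_forall_supIrred
        intro q hq hqw
        refine (hgal q z hq).2 (hz.2 ?_)
        show x ⊓ dual q ≤ y
        apply aux_le_of_forall_supIrred
        intro p hp hple
        have hpx : p ≤ x := hple.trans inf_le_left
        have hpd : p ≤ dual q := hple.trans inf_le_right
        obtain ⟨x', hx', hx'q, hx'd⟩ := H p q hp hq hpd
        have h1 : x' ≤ φ x := ((hgal x' p hx').2 hx'd.le).trans (hmono hpx)
        have h2 : x' ≤ w := hx'q.trans hqw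
        have h3 : x' ≤ φ y := (le_inf h1 h2).trans hw
        exact hx'd ▸ (hgal x' y hx').1 h3
  · constructor
    · -- closed ⇒ p-morphism (up)
      intro H p q hp hq hqp
      by_contra hno
      push_neg at hno
      obtain ⟨bp, hbp1, hbp2⟩ := aux_exists_greatest_not_le hp
      haveI := Fintype.ofFinite E
      set b := (Finset.univ.filter (fun x : E => ¬ q ≤ x)).sup id with hbdef
      have hb : ∀ x : E, ¬ q ≤ x → x ≤ b := fun x hx =>
        Finset.le_sup (f := id) (Finset.mem_filter.2 ⟨Finset.mem_univ _, hx⟩)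
      have hqb : ¬ q ≤ b := by
        intro h
        obtain ⟨i, hi, hqi⟩ := hq.supPrime.le_finset_sup.1 h
        exact (Finset.mem_filter.1 hi).2 hqi
      have hmain : φ p ≤ φ bp ⊔ b := by
        apply aux_le_of_forall_supIrred
        intro x hx hxp
        have hd : dual x ≤ p := (hgal x p hx).1 hxp
        by_cases hqx : q ≤ x
        · have hne : dual x ≠ p := fun he => hno x hx hqx he
          have hdbp : dual x ≤ bp := hbp2 _ (fun hle => hne (le_antisymm hd hle))
          exact ((hdual x hx).1.trans (hmono hdbp)).trans le_sup_left
        · exact (hb x hqx).trans le_sup_right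
      obtain ⟨x, hx1, hx2⟩ := H p bp b hmain
      have hpx : p ≤ x := (hp.supPrime.le_sup.1 hx1).resolve_left hbp1
      exact hqb (((hgal q p hq).2 hqp).trans ((hmono hpx).trans hx2))
    · -- p-morphism (up) ⇒ closed
      intro H a₀ a₁ b hab
      haveI := Fintype.ofFinite D
      refine ⟨(Finset.univ.filter (fun x : D => φ x ≤ b)).sup id, ?_, ?_⟩
      · apply aux_le_of_forall_supIrred
        intro p hp hpa
        by_cases hpa1 : p ≤ a₁
        · exact hpa1.trans le_sup_left
        · refine le_trans ?_ le_sup_right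
          refine Finset.le_sup (f := id) (Finset.mem_filter.2 ⟨Finset.mem_univ _, ?_⟩)
          -- show φ p ≤ b
          apply aux_le_of_forall_supIrred
          intro q hq hqp
          have hd : dual q ≤ p := (hgal q p hq).1 hqp
          obtain ⟨x, hx, hqx, hdx⟩ := H p q hp hq hd
          have hxp : x ≤ φ p := (hgal x p hx).2 hdx.le
          have hxab : x ≤ φ a₁ ⊔ b := hxp.trans ((hmono hpa).trans hab)
          rcases hx.supPrime.le_sup.1 hxab with h1 | h2
          · exact absurd (hdx ▸ (hgal x a₁ hx).1 h1) hpa1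
          · exact hqx.trans h2
      · refine Finset.sup_induction (p := fun z : D => φ z ≤ b) (hφ0.le.trans bot_le) ?_ ?_
        · intro u hu v hv
          exact ((hφ u v).1).le.trans (sup_le hu hv)
        · intro i hi
          exact (Finset.mem_filter.1 hi).2
end
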